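/- H-consistency transfer for the augmented deferral-advice surrogate: let 𝒳 be a measurable space with probability measure μ, Π a finite nonempty set, w : 𝒳 → (Π → ℝ) measurable and bounded with w_i(x) ≥ 0 and S := ∫ Σ_{i∈Π} w_i(x) dμ(x) > 0, and d : 𝒳 → ℝ integrable. Let H be a set of measurable score functions s : 𝒳 → (Π → ℝ), with dec(s) : 𝒳 → Π a measurable map satisfying dec(s)(x) ∈ argmax_{i∈Π} s(x)(i), and let Φ : (Π → ℝ) → Π → [0,∞) be a surrogate loss such that x ↦ Φ(s(x))(i) is measurable for every s ∈ H and i ∈ Π. For a measurable family p : 𝒳 → (Π → [0,1]) with Σ_{i∈Π} p_i(x) = 1 for all x, define C^p_{01}(π, x) := Σ_i p_i(x)·1{π(x) ≠ i} and C^p_Φ(s, x) := Σ_i p_i(x)·Φ(s(x))(i), and assume all the pointwise infima over H appearing below are measurable and integrable. Suppose Γ : [0,∞) → [0,∞) is nondecreasing and concave with Γ(0) = 0 and that the following base bound holds: for every probability measure ν on 𝒳, every measurable probability-weight family p as above, and every s ∈ H, ∫ C^p_{01}(dec(s), x) dν − ∫ inf_{s′∈H} C^p_{01}(dec(s′), x)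 dν ≤ Γ(∫ C^p_Φ(s, x) dν − ∫ inf_{s′∈H} C^p_Φ(s′, x) dν). Define C_ℓ(π, x) := d(x) + Σ_i w_i(x)·1{π(x) ≠ i}, C^{aug}_Φ(s, x) := Σ_i w_i(x)·Φ(s(x))(i), and Γ̃(u) := S·Γ(u/S). Then for every s ∈ H, ∫ C_ℓ(dec(s), x) dμ − ∫ inf_{s′∈H} C_ℓ(dec(s′), x) dμ ≤ Γ̃(∫ C^{aug}_Φ(s, x) dμ − ∫ inf_{s′∈H} C^{aug}_Φ(s′, x) dμ). -/

import Mathlib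

open MeasureTheory
open scoped ENNReal

lemma aux_mul_ciInf {ι : Sort*} [Nonempty ι] {c : ℝ} (hc : 0 ≤ c) (f : ι → ℝ)
    (hf : ∀ i, 0 ≤ f i) : c * (⨅ i, f i) = ⨅ i, c * f i := by
  have hbdd : BddBelow (Set.range f) := ⟨0, by rintro y ⟨i, rfl⟩; exact hf i⟩
  rcases eq_or_lt_of_le hc with h | h
  · simp [← h, ciInf_const]
  · have hbdd2 : BddBelow (Set.range fun i => c * f i) :=
      ⟨0, by rintro y ⟨i, rfl⟩; exact mul_nonneg hc (hf i)⟩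
    apply le_antisymm
    · exact le_ciInf fun i => mul_le_mul_of_nonneg_left (ciInf_le hbdd i) hc
    · have h1 : (⨅ i, c * f i) / c ≤ ⨅ i, f i := le_ciInf fun i => by
        rw [div_le_iff₀ h]
        calc (⨅ j, c * f j) ≤ c * f i := ciInf_le hbdd2 i
          _ = f i * c := mul_comm _ _
      calc (⨅ i, c * f i) = c * ((⨅ i, c * f i) / c) := by field_simp
        _ ≤ c * ⨅ i, f i := mul_le_mul_of_nonneg_left h1 hc

lemma aux_add_ciInf {ι : Sort*} [Nonempty ι] (a : ℝ) (f : ι → ℝ)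
    (hf : ∀ i, 0 ≤ f i) : (⨅ i, (a + f i)) = a + ⨅ i, f i := by
  have hbdd : BddBelow (Set.range f) := ⟨0, by rintro y ⟨i, rfl⟩; exact hf i⟩
  have hbdd2 : BddBelow (Set.range fun i => a + f i) :=
    ⟨a, by rintro y ⟨i, rfl⟩; exact le_add_of_nonneg_right (hf i)⟩
  apply le_antisymm
  · have h1 : (⨅ i, (a + f i)) - a ≤ ⨅ i, f i := le_ciInf fun i => by
      have := ciInf_le hbdd2 i; linarith
    linarith
  · exact le_ciInf fun i => add_le_add le_rfl (ciInf_le hbdd i)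


/-- **H-consistency transfer for the augmented deferral-advice surrogate**
(Theorem 2 of the paper). `Act` is the finite nonempty composite action set
(the paper's `Π = [J]×[K]₀`), `w` the conditional mismatch weights with total mass
`S > 0`, `d` the action-independent offset, `H` a class of score functions with
decoding `dec`, `Φ` a nonnegative surrogate loss, and `Γ` a nondecreasing concave
transfer function with `Γ(0) = 0` for which the multiclass H-consistency bound holds
for every probability measure `ν` and probability-weight family `p`. Then the
deferral-advice excess risk (including minimizability gaps) is bounded by
`Γ̃(u) = S·Γ(u/S)` applied to the augmented surrogate excess risk. -/
theorem h_consistency_transfer_augmented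
    {𝒳 : Type*} [MeasurableSpace 𝒳] (μ : Measure 𝒳) [IsProbabilityMeasure μ]
    {Act : Type*} [Fintype Act] [Nonempty Act] [DecidableEq Act]
    [MeasurableSpace Act] [MeasurableSingletonClass Act]
    (w : 𝒳 → Act → ℝ)
    (hwmeas : ∀ i, Measurable (fun x => w x i))
    (hwbdd : ∃ M : ℝ, ∀ x i, |w x i| ≤ M)
    (hwnn : ∀ x i, 0 ≤ w x i)
    (S : ℝ) (hS : S = ∫ x, ∑ i : Act, w x i ∂μ) (hSpos : 0 < S)
    (d : 𝒳 → ℝ) (hd : Integrable d μ)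
    (H : Set (𝒳 → Act → ℝ)) (hHne : H.Nonempty)
    (dec : (𝒳 → Act → ℝ) → 𝒳 → Act)
    (hdec_meas : ∀ s ∈ H, Measurable (dec s))
    (hdec_argmax : ∀ s ∈ H, ∀ x i, s x i ≤ s x (dec s x))
    (Φ : (Act → ℝ) → Act → ℝ)
    (hΦnn : ∀ v i, 0 ≤ Φ v i)
    (hΦmeas : ∀ s ∈ H, ∀ i, Measurable (fun x => Φ (s x) i))
    (Γ : ℝ → ℝ)
    (hΓ0 : Γ 0 = 0)
    (hΓmono : MonotoneOn Γ (Set.Ici 0))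
    (hΓconc : ConcaveOn ℝ (Set.Ici 0) Γ)
    (hΓnn : ∀ u : ℝ, 0 ≤ u → 0 ≤ Γ u)
    -- base multiclass H-consistency bound, for every data distribution
    (hbase : ∀ ν : Measure 𝒳, IsProbabilityMeasure ν →
      ∀ p : 𝒳 → Act → ℝ, (∀ i, Measurable (fun x => p x i)) →
        (∀ x i, 0 ≤ p x i) → (∀ x, ∑ i : Act, p x i = 1) →
      ∀ s ∈ H,
        ∫ x, (∑ i : Act, p x i * (if dec s x ≠ i then (1 : ℝ) else 0)) ∂ν
          - ∫ x, (⨅ s' : H, ∑ i : Act,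
              p x i * (if dec s'.1 x ≠ i then (1 : ℝ) else 0)) ∂ν
        ≤ Γ (∫ x, (∑ i : Act, p x i * Φ (s x) i) ∂ν
          - ∫ x, (⨅ s' : H, ∑ i : Act, p x i * Φ (s'.1 x) i) ∂ν))
    -- integrability of the pointwise quantities appearing below
    (hintΦ : ∀ s ∈ H, Integrable (fun x => ∑ i : Act, w x i * Φ (s x) i) μ)
    (hinfℓ : Integrable (fun x =>
      ⨅ s' : H, (d x + ∑ i : Act,
        w x i * (if dec s'.1 x ≠ i then (1 : ℝ) else 0))) μ)
    (hinfΦ : Integrable (fun x => ⨅ s' : H, ∑ i : Act, w x i * Φ (s'.1 x) i) μ) :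
    ∀ s ∈ H,
      ∫ x, (d x + ∑ i : Act, w x i * (if dec s x ≠ i then (1 : ℝ) else 0)) ∂μ
        - ∫ x, (⨅ s' : H, (d x + ∑ i : Act,
            w x i * (if dec s'.1 x ≠ i then (1 : ℝ) else 0))) ∂μ
      ≤ S * Γ ((∫ x, (∑ i : Act, w x i * Φ (s x) i) ∂μ
          - ∫ x, (⨅ s' : H, ∑ i : Act, w x i * Φ (s'.1 x) i) ∂μ) / S) := by
  intro s hs
  classical
  obtain ⟨M, hM⟩ := hwbdd
  haveI : Nonempty H := hHne.to_subtype
  set W : 𝒳 → ℝ := fun x => ∑ i : Act, w x i with hW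
  have hWmeas : Measurable W := Finset.measurable_sum _ (fun i _ => hwmeas i)
  have hWnn : ∀ x, 0 ≤ W x := fun x => Finset.sum_nonneg fun i _ => hwnn x i
  have hWzero : ∀ x, W x = 0 → ∀ i, w x i = 0 := by
    intro x hx i
    have := (Finset.sum_eq_zero_iff_of_nonneg (fun i _ => hwnn x i)).1 hx
    exact this i (Finset.mem_univ i)
  have hWint : Integrable W μ := by
    refine (integrable_const ((Fintype.card Act : ℝ) * M)).mono'
      hWmeas.aestronglyMeasurable (ae_of_all _ fun x => ?_)
    rw [Real.norm_eq_abs, abs_of_nonneg (hWnn x)]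
    calc W x ≤ ∑ _i : Act, M := Finset.sum_le_sum fun i _ =>
          (abs_le.1 (hM x i)).2
      _ = (Fintype.card Act : ℝ) * M := by
          simp [Finset.sum_const, Finset.card_univ, nsmul_eq_mul]
  -- the tilted probability measure
  set ρ : 𝒳 → NNReal := fun x => Real.toNNReal (W x / S) with hρ
  have hρmeas : Measurable ρ := (hWmeas.div_const S).real_toNNReal
  have hρcoe : ∀ x, ((ρ x : ℝ)) = W x / S := fun x =>
    Real.coe_toNNReal _ (div_nonneg (hWnn x) hSpos.le)
  set ν : Measure 𝒳 := μ.withDensity (fun x => (ρ x : ℝ≥0∞)) with hν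
  have hρint : Integrable (fun x => (ρ x : ℝ)) μ := by
    refine (hWint.div_const S).congr (ae_of_all _ fun x => (hρcoe x).symm)
  have hνprob : IsProbabilityMeasure ν := by
    constructor
    rw [hν, withDensity_apply _ MeasurableSet.univ, Measure.restrict_univ,
      lintegral_coe_eq_integral _ hρint]
    have : ∫ x, ((ρ x : ℝ)) ∂μ = 1 := by
      rw [integral_congr_ae (ae_of_all _ hρcoe), integral_div, ← hS,
        div_self hSpos.ne']
    rw [this]; simp
  -- conditional probabilities
  set p : 𝒳 → Act → ℝ := fun x i =>
    if W x = 0 then (Fintype.card Act : ℝ)⁻¹ else w x i / W x with hp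
  have hcard : (0 : ℝ) < (Fintype.card Act : ℝ) := by
    exact_mod_cast Fintype.card_pos
  have hpmeas : ∀ i, Measurable fun x => p x i := fun i =>
    Measurable.ite (hWmeas (measurableSet_singleton 0)) measurable_const
      ((hwmeas i).div hWmeas)
  have hpnn : ∀ x i, 0 ≤ p x i := by
    intro x i; by_cases h : W x = 0 <;> simp only [hp, h, if_true, if_false]
    · positivity
    · exact div_nonneg (hwnn x i) (hWnn x)
  have hpsum : ∀ x, ∑ i : Act, p x i = 1 := by
    intro x; by_cases h : W x = 0 <;> simp only [hp, h, if_true, if_false]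
    · rw [Finset.sum_const, Finset.card_univ, nsmul_eq_mul,
        mul_inv_cancel₀ hcard.ne']
    · rw [← Finset.sum_div]; exact div_self h
  -- integral transfer from ν to μ
  have conv : ∀ g : 𝒳 → ℝ, ∫ x, g x ∂ν = ∫ x, (ρ x : ℝ) * g x ∂μ := by
    intro g
    rw [hν, integral_withDensity_eq_integral_smul hρmeas]
    simp [NNReal.smul_def, smul_eq_mul]
  -- pointwise identities
  have key1 : ∀ (x : 𝒳) (g : Act → ℝ),
      (ρ x : ℝ) * (∑ i : Act, p x i * g i) = (1/S) * ∑ i : Act, w x i * g i := by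
    intro x g
    rw [hρcoe x, Finset.mul_sum, Finset.mul_sum]
    refine Finset.sum_congr rfl fun i _ => ?_
    by_cases h : W x = 0
    · simp [hp, h, hWzero x h i]
    · simp only [hp, h, if_false]
      field_simp
      try ring
  have key2 : ∀ (x : 𝒳) (F : H → Act → ℝ), (∀ s' i, 0 ≤ F s' i) →
      (ρ x : ℝ) * (⨅ s' : H, ∑ i : Act, p x i * F s' i)
        = (1/S) * (⨅ s' : H, ∑ i : Act, w x i * F s' i) := by
    intro x F hF
    rw [hρcoe x]
    by_cases h : W x = 0
    · have : ∀ s' : H, ∑ i : Act, w x i * F s' i = 0 := fun s' =>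
        Finset.sum_eq_zero fun i _ => by rw [hWzero x h i, zero_mul]
      simp [h, this, ciInf_const]
    · have hWpos : 0 < W x := lt_of_le_of_ne (hWnn x) (Ne.symm h)
      have hnn : ∀ s' : H, 0 ≤ ∑ i : Act, p x i * F s' i := fun s' =>
        Finset.sum_nonneg fun i _ => mul_nonneg (hpnn x i) (hF s' i)
      have : W x / S * (⨅ s' : H, ∑ i : Act, p x i * F s' i)
          = (1/S) * (W x * ⨅ s' : H, ∑ i : Act, p x i * F s' i) := by ring
      rw [this, aux_mul_ciInf (hWnn x) _ hnn]
      congr 1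
      refine iInf_congr fun s' => ?_
      rw [Finset.mul_sum]
      refine Finset.sum_congr rfl fun i _ => ?_
      simp only [hp, h, if_false]
      field_simp
      try ring
  -- rewrite the four ν-integrals
  have E1 : ∫ x, (∑ i : Act, p x i * (if dec s x ≠ i then (1:ℝ) else 0)) ∂ν
      = (1/S) * ∫ x, (∑ i : Act, w x i * (if dec s x ≠ i then (1:ℝ) else 0)) ∂μ := by
    rw [conv, integral_congr_ae (ae_of_all _ fun x => key1 x _), integral_const_mul]
  have E2 : ∫ x, (⨅ s' : H, ∑ i : Act,
        p x i * (if dec s'.1 x ≠ i then (1:ℝ) else 0)) ∂ν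
      = (1/S) * ∫ x, (⨅ s' : H, ∑ i : Act,
        w x i * (if dec s'.1 x ≠ i then (1:ℝ) else 0)) ∂μ := by
    rw [conv, integral_congr_ae (ae_of_all _ fun x =>
      key2 x _ (fun s' i => by positivity)), integral_const_mul]
  have E3 : ∫ x, (∑ i : Act, p x i * Φ (s x) i) ∂ν
      = (1/S) * ∫ x, (∑ i : Act, w x i * Φ (s x) i) ∂μ := by
    rw [conv, integral_congr_ae (ae_of_all _ fun x => key1 x _), integral_const_mul]
  have E4 : ∫ x, (⨅ s' : H, ∑ i : Act, p x i * Φ (s'.1 x) i) ∂ν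
      = (1/S) * ∫ x, (⨅ s' : H, ∑ i : Act, w x i * Φ (s'.1 x) i) ∂μ := by
    rw [conv, integral_congr_ae (ae_of_all _ fun x =>
      key2 x _ (fun s' i => hΦnn _ i)), integral_const_mul]
  have hbase' := hbase ν hνprob p hpmeas hpnn hpsum s hs
  rw [E1, E2, E3, E4] at hbase'
  -- LHS decomposition: the d-offset cancels
  set A : ℝ := ∫ x, (∑ i : Act, w x i * (if dec s x ≠ i then (1:ℝ) else 0)) ∂μ with hA
  set B : ℝ := ∫ x, (⨅ s' : H, ∑ i : Act,
      w x i * (if dec s'.1 x ≠ i then (1:ℝ) else 0)) ∂μ with hB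
  set A' : ℝ := ∫ x, (∑ i : Act, w x i * Φ (s x) i) ∂μ with hA'
  set B' : ℝ := ∫ x, (⨅ s' : H, ∑ i : Act, w x i * Φ (s'.1 x) i) ∂μ with hB'
  have hgmeas : Measurable (fun x => ∑ i : Act,
      w x i * (if dec s x ≠ i then (1:ℝ) else 0)) := by
    refine Finset.measurable_sum _ fun i _ => (hwmeas i).mul ?_
    have hms : MeasurableSet {x | dec s x ≠ i} :=
      (hdec_meas s hs (measurableSet_singleton i)).compl
    exact Measurable.ite hms measurable_const measurable_const
  have hgint : Integrable (fun x => ∑ i : Act,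
      w x i * (if dec s x ≠ i then (1:ℝ) else 0)) μ := by
    refine (integrable_const ((Fintype.card Act : ℝ) * M)).mono'
      hgmeas.aestronglyMeasurable (ae_of_all _ fun x => ?_)
    rw [Real.norm_eq_abs]
    calc |∑ i : Act, w x i * (if dec s x ≠ i then (1:ℝ) else 0)|
        ≤ ∑ i : Act, |w x i * (if dec s x ≠ i then (1:ℝ) else 0)| :=
          Finset.abs_sum_le_sum_abs _ _
      _ ≤ ∑ _i : Act, M := by
          refine Finset.sum_le_sum fun i _ => ?_
          rw [abs_mul]
          calc |w x i| * |if dec s x ≠ i then (1:ℝ) else 0|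
              ≤ |w x i| * 1 := by
                refine mul_le_mul_of_nonneg_left ?_ (abs_nonneg _)
                split <;> simp
            _ = |w x i| := mul_one _
            _ ≤ M := hM x i
      _ = (Fintype.card Act : ℝ) * M := by
          simp [Finset.sum_const, Finset.card_univ, nsmul_eq_mul]
  have hshift : ∀ x, (⨅ s' : H, (d x + ∑ i : Act,
      w x i * (if dec s'.1 x ≠ i then (1:ℝ) else 0)))
      = d x + ⨅ s' : H, ∑ i : Act,
        w x i * (if dec s'.1 x ≠ i then (1:ℝ) else 0) := by
    intro x
    exact aux_add_ciInf (d x) _ fun s' =>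
      Finset.sum_nonneg fun i _ => mul_nonneg (hwnn x i) (by split <;> norm_num)
  have hinfint : Integrable (fun x => ⨅ s' : H, ∑ i : Act,
      w x i * (if dec s'.1 x ≠ i then (1:ℝ) else 0)) μ := by
    have h1 : Integrable (fun x => d x + ⨅ s' : H, ∑ i : Act,
        w x i * (if dec s'.1 x ≠ i then (1:ℝ) else 0)) μ :=
      hinfℓ.congr (ae_of_all _ fun x => hshift x)
    have := h1.sub hd
    exact this.congr (ae_of_all _ fun x => by simp only [Pi.sub_apply]; ring)
  have hLHS1 : ∫ x, (d x + ∑ i : Act,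
      w x i * (if dec s x ≠ i then (1:ℝ) else 0)) ∂μ = (∫ x, d x ∂μ) + A := by
    rw [integral_add hd hgint]
  have hLHS2 : ∫ x, (⨅ s' : H, (d x + ∑ i : Act,
      w x i * (if dec s'.1 x ≠ i then (1:ℝ) else 0))) ∂μ = (∫ x, d x ∂μ) + B := by
    rw [integral_congr_ae (ae_of_all _ hshift), integral_add hd hinfint]
  rw [hLHS1, hLHS2]
  have harg : (1/S) * A' - (1/S) * B' = (A' - B') / S := by ring
  rw [harg] at hbase'
  calc (∫ x, d x ∂μ) + A - ((∫ x, d x ∂μ) + B) = S * ((1/S) * A - (1/S) * B) := by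
        field_simp
        ring
    _ ≤ S * Γ ((A' - B') / S) := mul_le_mul_of_nonneg_left hbase' hSpos.le
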